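/- Let g ∈ ℚ[[q]], and let f, f̃ ∈ ℚ[[q]] both satisfy f(0) = 0, f'(0) ≠ 0 (respectively f̃(0) = 0, f̃'(0) ≠ 0) and the same Schwarzian equation S_q f + g = 0 = S_q f̃ + g. Then there exist a ∈ ℚ with a ≠ 0 and b ∈ ℚ such that f̃ = f/(a + b·f) (the denominator a + b·f being a unit of ℚ[[q]]). Thus a solution of a Schwarzian equation in the class f(0) = 0, f'(0) ≠ 0 is unique up to the transformations f ↦ f/(a + bf). -/

import Mathlib

/-- The formal derivative `df/dq` on `ℚ[[q]]`. -/
noncomputable def sder (f : PowerSeries ℚ) : PowerSeries ℚ := PowerSeries.derivative ℚ f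

/-- The formal Schwarzian derivative
`S_q f = (f''/f')' − (1/2)(f''/f')²`, for `f` with invertible `f'`. -/
noncomputable def schwarzian (f : PowerSeries ℚ) : PowerSeries ℚ :=
  sder (sder (sder f) * (sder f)⁻¹)
    - PowerSeries.C (R := ℚ) (1 / 2) * (sder (sder f) * (sder f)⁻¹) ^ 2

open PowerSeries

lemma sder_add (f g : PowerSeries ℚ) : sder (f + g) = sder f + sder g := map_add _ _ _

lemma sder_sub (f g : PowerSeries ℚ) : sder (f - g) = sder f - sder g := map_sub _ _ _

lemma sder_C (r : ℚ) : sder (C (R := ℚ) r) = 0 := PowerSeries.derivative_C (r := r)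

lemma sder_mul (f g : PowerSeries ℚ) : sder (f * g) = f * sder g + g * sder f := by
  simpa [sder, smul_eq_mul] using Derivation.leibniz (PowerSeries.derivative ℚ) f g

lemma sder_inv (f : PowerSeries ℚ) : sder f⁻¹ = -f⁻¹ ^ 2 * sder f :=
  PowerSeries.derivative_inv' f

lemma constantCoeff_sder (f : PowerSeries ℚ) :
    constantCoeff (R := ℚ) (sder f) = coeff (R := ℚ) 1 f := by
  rw [← coeff_zero_eq_constantCoeff, sder, PowerSeries.coeff_derivative]
  norm_num

/-- formal ODE: if `w' = v * w` and `w(0) = 0` then `w = 0`. -/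
lemma ode_zero (w v : PowerSeries ℚ) (h0 : constantCoeff (R := ℚ) w = 0)
    (hw : sder w = v * w) : w = 0 := by
  have key : ∀ n, coeff (R := ℚ) n w = 0 := by
    intro n
    induction n using Nat.strong_induction_on with
    | _ n ih =>
      match n with
      | 0 => simpa using h0
      | Nat.succ m =>
        have h1 : coeff (R := ℚ) m (sder w) = coeff (R := ℚ) m (v * w) := by rw [hw]
        rw [sder, PowerSeries.coeff_derivative, PowerSeries.coeff_mul] at h1
        have h2 : ∑ p ∈ Finset.HasAntidiagonal.antidiagonal m, coeff (R := ℚ) p.1 v * coeff (R := ℚ) p.2 w = 0 := by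
          apply Finset.sum_eq_zero
          intro p hp
          have : p.2 ≤ m := Finset.HasAntidiagonal.antidiagonal.snd_le hp
          rw [ih p.2 (Nat.lt_succ_of_le this), mul_zero]
        rw [h2] at h1
        exact (mul_eq_zero.mp h1).resolve_right (by positivity)
  ext n
  simp [key n]

/-- zero derivative implies constant -/
lemma sder_eq_zero (u : PowerSeries ℚ) (h : sder u = 0) :
    u = C (R := ℚ) (constantCoeff (R := ℚ) u) := by
  apply PowerSeries.derivative.ext
  · rw [← sder, h, ← sder_C (constantCoeff (R := ℚ) u), sder_C]
    exact (PowerSeries.derivative_C).symm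
  · simp

/-- Uniqueness: two solutions with matching coefficients 1 and 2 agree. -/
lemma schwarzian_unique (f h : PowerSeries ℚ)
    (hf0 : constantCoeff (R := ℚ) f = 0) (hh0 : constantCoeff (R := ℚ) h = 0)
    (h1 : coeff (R := ℚ) 1 f = coeff (R := ℚ) 1 h) (h2 : coeff (R := ℚ) 2 f = coeff (R := ℚ) 2 h)
    (hne : coeff (R := ℚ) 1 f ≠ 0)
    (hS : schwarzian f = schwarzian h) : f = h := by
  have hnef : constantCoeff (R := ℚ) (sder f) ≠ 0 := by rwa [constantCoeff_sder]
  have hneh : constantCoeff (R := ℚ) (sder h) ≠ 0 := by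
    rw [constantCoeff_sder, ← h1]; exact hne
  have hFF : sder f * (sder f)⁻¹ = 1 := PowerSeries.mul_inv_cancel _ hnef
  have hHH : sder h * (sder h)⁻¹ = 1 := PowerSeries.mul_inv_cancel _ hneh
  -- the ODE for w = P - Q
  have hw : sder (sder (sder f) * (sder f)⁻¹ - sder (sder h) * (sder h)⁻¹)
      = (C (R := ℚ) (1/2) * (sder (sder f) * (sder f)⁻¹ + sder (sder h) * (sder h)⁻¹))
        * (sder (sder f) * (sder f)⁻¹ - sder (sder h) * (sder h)⁻¹) := by
    rw [sder_sub]
    have hS' : sder (sder (sder f) * (sder f)⁻¹)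
        - C (R := ℚ) (1/2) * (sder (sder f) * (sder f)⁻¹) ^ 2
        = sder (sder (sder h) * (sder h)⁻¹)
        - C (R := ℚ) (1/2) * (sder (sder h) * (sder h)⁻¹) ^ 2 := hS
    linear_combination hS'
  have hw0 : constantCoeff (R := ℚ) (sder (sder f) * (sder f)⁻¹ - sder (sder h) * (sder h)⁻¹) = 0 := by
    have cP : constantCoeff (R := ℚ) (sder (sder f) * (sder f)⁻¹)
        = (2 * coeff (R := ℚ) 2 f) * (coeff (R := ℚ) 1 f)⁻¹ := by
      rw [map_mul, PowerSeries.constantCoeff_inv, constantCoeff_sder,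
        constantCoeff_sder, sder, PowerSeries.coeff_derivative]
      push_cast
      ring
    have cQ : constantCoeff (R := ℚ) (sder (sder h) * (sder h)⁻¹)
        = (2 * coeff (R := ℚ) 2 h) * (coeff (R := ℚ) 1 h)⁻¹ := by
      rw [map_mul, PowerSeries.constantCoeff_inv, constantCoeff_sder,
        constantCoeff_sder, sder, PowerSeries.coeff_derivative]
      push_cast
      ring
    rw [map_sub, cP, cQ, h1, h2]
    ring
  have hPQ : sder (sder f) * (sder f)⁻¹ = sder (sder h) * (sder h)⁻¹ :=
    sub_eq_zero.mp (ode_zero _ _ hw0 hw)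
  have hcross : sder (sder f) * sder h = sder (sder h) * sder f := by
    linear_combination (sder f * sder h) * hPQ
      - (sder (sder f) * sder h) * hFF + (sder (sder h) * sder f) * hHH
  have hquot : sder (sder f * (sder h)⁻¹) = 0 := by
    rw [sder_mul, sder_inv]
    linear_combination ((sder h)⁻¹)^2 * hcross - (sder (sder f) * (sder h)⁻¹) * hHH
  have hconst : sder f * (sder h)⁻¹ = C (R := ℚ) 1 := by
    rw [sder_eq_zero _ hquot]
    congr 1
    rw [map_mul, PowerSeries.constantCoeff_inv, constantCoeff_sder, constantCoeff_sder, h1]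
    exact mul_inv_cancel₀ (h1 ▸ hne)
  have hder : sder f = sder h := by
    have := congrArg (· * sder h) hconst
    simp only [map_one, one_mul] at this
    calc sder f = sder f * ((sder h)⁻¹ * sder h) := by
          rw [PowerSeries.inv_mul_cancel _ hneh, mul_one]
      _ = sder h := by rw [← mul_assoc, this]
  exact PowerSeries.derivative.ext hder (hf0.trans hh0.symm)

section Moebius

variable (f : PowerSeries ℚ) (a b : ℚ)

lemma u_const (hf0 : constantCoeff (R := ℚ) f = 0) :
    constantCoeff (R := ℚ) (C (R := ℚ) a + C (R := ℚ) b * f) = a := by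
  simp [hf0]

lemma moebius_sder (ha : a ≠ 0) (hf0 : constantCoeff (R := ℚ) f = 0) :
    sder (f * (C (R := ℚ) a + C (R := ℚ) b * f)⁻¹)
      = C (R := ℚ) a * sder f * ((C (R := ℚ) a + C (R := ℚ) b * f)⁻¹) ^ 2 := by
  have hu : constantCoeff (R := ℚ) (C (R := ℚ) a + C (R := ℚ) b * f) ≠ 0 := by
    rw [u_const f a b hf0]; exact ha
  have huv : (C (R := ℚ) a + C (R := ℚ) b * f) * (C (R := ℚ) a + C (R := ℚ) b * f)⁻¹ = 1 :=
    PowerSeries.mul_inv_cancel _ hu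
  rw [sder_mul, sder_inv]
  have hsu : sder (C (R := ℚ) a + C (R := ℚ) b * f) = C (R := ℚ) b * sder f := by
    rw [sder_add, sder_C, sder_mul, sder_C]
    ring
  rw [hsu]
  linear_combination (-(sder f * (C (R := ℚ) a + C (R := ℚ) b * f)⁻¹)) * huv

lemma moebius_sder2 (ha : a ≠ 0) (hf0 : constantCoeff (R := ℚ) f = 0) :
    sder (sder (f * (C (R := ℚ) a + C (R := ℚ) b * f)⁻¹))
      = C (R := ℚ) a * sder (sder f) * ((C (R := ℚ) a + C (R := ℚ) b * f)⁻¹) ^ 2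
        - C (R := ℚ) (2 * a * b) * (sder f) ^ 2 * ((C (R := ℚ) a + C (R := ℚ) b * f)⁻¹) ^ 3 := by
  have hsu : sder (C (R := ℚ) a + C (R := ℚ) b * f) = C (R := ℚ) b * sder f := by
    rw [sder_add, sder_C, sder_mul, sder_C]
    ring
  rw [moebius_sder f a b ha hf0]
  rw [show ((C (R := ℚ) a + C (R := ℚ) b * f)⁻¹) ^ 2
      = (C (R := ℚ) a + C (R := ℚ) b * f)⁻¹ * (C (R := ℚ) a + C (R := ℚ) b * f)⁻¹ from sq _]
  rw [sder_mul, sder_mul, sder_mul, sder_C, sder_inv, hsu,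
    show (C (R := ℚ)) (2 * a * b) = 2 * C (R := ℚ) a * C (R := ℚ) b by rw [map_mul, map_mul, map_ofNat]]
  ring

lemma moebius_sder_inv (ha : a ≠ 0) (hf0 : constantCoeff (R := ℚ) f = 0)
    (hf1 : coeff (R := ℚ) 1 f ≠ 0) :
    (sder (f * (C (R := ℚ) a + C (R := ℚ) b * f)⁻¹))⁻¹
      = C (R := ℚ) a⁻¹ * (sder f)⁻¹ * (C (R := ℚ) a + C (R := ℚ) b * f) ^ 2 := by
  have hu : constantCoeff (R := ℚ) (C (R := ℚ) a + C (R := ℚ) b * f) ≠ 0 := by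
    rw [u_const f a b hf0]; exact ha
  have huv : (C (R := ℚ) a + C (R := ℚ) b * f) * (C (R := ℚ) a + C (R := ℚ) b * f)⁻¹ = 1 :=
    PowerSeries.mul_inv_cancel _ hu
  have hnef : constantCoeff (R := ℚ) (sder f) ≠ 0 := by rwa [constantCoeff_sder]
  have hFF : sder f * (sder f)⁻¹ = 1 := PowerSeries.mul_inv_cancel _ hnef
  have haa : C (R := ℚ) a * C (R := ℚ) a⁻¹ = (1 : PowerSeries ℚ) := by
    rw [← map_mul, mul_inv_cancel₀ ha, map_one]
  rw [moebius_sder f a b ha hf0]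
  rw [PowerSeries.inv_eq_iff_mul_eq_one]
  · linear_combination (sder f * (sder f)⁻¹ *
        ((C (R := ℚ) a + C (R := ℚ) b * f) * (C (R := ℚ) a + C (R := ℚ) b * f)⁻¹)^2) * haa
      + (((C (R := ℚ) a + C (R := ℚ) b * f) * (C (R := ℚ) a + C (R := ℚ) b * f)⁻¹)^2) * hFF
      + ((C (R := ℚ) a + C (R := ℚ) b * f) * (C (R := ℚ) a + C (R := ℚ) b * f)⁻¹ + 1) * huv
  · simp only [map_mul, map_pow, PowerSeries.constantCoeff_inv, u_const f a b hf0,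
      PowerSeries.constantCoeff_C, constantCoeff_sder]
    exact mul_ne_zero (mul_ne_zero (by simpa using ha) hf1) (by simp [ha])

lemma moebius_P (ha : a ≠ 0) (hf0 : constantCoeff (R := ℚ) f = 0) (hf1 : coeff (R := ℚ) 1 f ≠ 0) :
    sder (sder (f * (C (R := ℚ) a + C (R := ℚ) b * f)⁻¹)) * (sder (f * (C (R := ℚ) a + C (R := ℚ) b * f)⁻¹))⁻¹
      = sder (sder f) * (sder f)⁻¹
        - 2 * C (R := ℚ) b * (sder f * (C (R := ℚ) a + C (R := ℚ) b * f)⁻¹) := by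
  have hu : constantCoeff (R := ℚ) (C (R := ℚ) a + C (R := ℚ) b * f) ≠ 0 := by
    rw [u_const f a b hf0]; exact ha
  have huv : (C (R := ℚ) a + C (R := ℚ) b * f) * (C (R := ℚ) a + C (R := ℚ) b * f)⁻¹ = 1 :=
    PowerSeries.mul_inv_cancel _ hu
  have hnef : constantCoeff (R := ℚ) (sder f) ≠ 0 := by rwa [constantCoeff_sder]
  have hFF : sder f * (sder f)⁻¹ = 1 := PowerSeries.mul_inv_cancel _ hnef
  have haa : C (R := ℚ) a * C (R := ℚ) a⁻¹ = (1 : PowerSeries ℚ) := by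
    rw [← map_mul, mul_inv_cancel₀ ha, map_one]
  rw [moebius_sder2 f a b ha hf0, moebius_sder_inv f a b ha hf0 hf1,
    show (C (R := ℚ)) (2 * a * b) = 2 * C (R := ℚ) a * C (R := ℚ) b by rw [map_mul, map_mul, map_ofNat]]
  linear_combination
    (sder (sder f) * (sder f)⁻¹ * ((C (R := ℚ) a + C (R := ℚ) b * f) * (C (R := ℚ) a + C (R := ℚ) b * f)⁻¹)^2
      - 2 * C (R := ℚ) b * sder f * (C (R := ℚ) a + C (R := ℚ) b * f)⁻¹ * (sder f * (sder f)⁻¹)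
        * ((C (R := ℚ) a + C (R := ℚ) b * f) * (C (R := ℚ) a + C (R := ℚ) b * f)⁻¹)^2) * haa
    + (-(2 * C (R := ℚ) b * sder f * (C (R := ℚ) a + C (R := ℚ) b * f)⁻¹
        * ((C (R := ℚ) a + C (R := ℚ) b * f) * (C (R := ℚ) a + C (R := ℚ) b * f)⁻¹)^2)) * hFF
    + ((sder (sder f) * (sder f)⁻¹ - 2 * C (R := ℚ) b * sder f * (C (R := ℚ) a + C (R := ℚ) b * f)⁻¹)
        * ((C (R := ℚ) a + C (R := ℚ) b * f) * (C (R := ℚ) a + C (R := ℚ) b * f)⁻¹ + 1)) * huv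

lemma moebius_schwarzian (ha : a ≠ 0) (hf0 : constantCoeff (R := ℚ) f = 0)
    (hf1 : coeff (R := ℚ) 1 f ≠ 0) :
    schwarzian (f * (C (R := ℚ) a + C (R := ℚ) b * f)⁻¹) = schwarzian f := by
  have hu : constantCoeff (R := ℚ) (C (R := ℚ) a + C (R := ℚ) b * f) ≠ 0 := by
    rw [u_const f a b hf0]; exact ha
  have huv : (C (R := ℚ) a + C (R := ℚ) b * f) * (C (R := ℚ) a + C (R := ℚ) b * f)⁻¹ = 1 :=
    PowerSeries.mul_inv_cancel _ hu
  have hnef : constantCoeff (R := ℚ) (sder f) ≠ 0 := by rwa [constantCoeff_sder]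
  have hFF : sder f * (sder f)⁻¹ = 1 := PowerSeries.mul_inv_cancel _ hnef
  have hsu : sder (C (R := ℚ) a + C (R := ℚ) b * f) = C (R := ℚ) b * sder f := by
    rw [sder_add, sder_C, sder_mul, sder_C]; ring
  have hhalf : (2 : PowerSeries ℚ) * C (R := ℚ) (1/2) = 1 := by
    rw [← map_ofNat (C (R := ℚ)) 2, ← map_mul]; norm_num
  have h2b : sder (2 * C (R := ℚ) b) = 0 := by
    rw [← map_ofNat (C (R := ℚ)) 2, ← map_mul, sder_C]
  have hiu : sder ((C (R := ℚ) a + C (R := ℚ) b * f)⁻¹)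
      = -((C (R := ℚ) a + C (R := ℚ) b * f)⁻¹) ^ 2 * (C (R := ℚ) b * sder f) := by
    rw [sder_inv, hsu]
  unfold schwarzian
  rw [moebius_P f a b ha hf0 hf1]
  have h2' : sder (2 : PowerSeries ℚ) = 0 := by
    rw [← map_ofNat (C (R := ℚ)) 2, sder_C]
  simp only [sder_sub, sder_mul, sder_add, sder_C, sder_inv, h2', mul_zero, zero_mul,
    add_zero, zero_add]
  linear_combination
    (2 * C (R := ℚ) b * (sder (sder f) * (sder f)⁻¹) * sder f * (C (R := ℚ) a + C (R := ℚ) b * f)⁻¹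
      - 2 * (C (R := ℚ) b)^2 * (sder f)^2 * ((C (R := ℚ) a + C (R := ℚ) b * f)⁻¹)^2) * hhalf
    + (2 * C (R := ℚ) b * sder (sder f) * (C (R := ℚ) a + C (R := ℚ) b * f)⁻¹) * hFF

end Moebius

/-- Two solutions `f, f̃` of the same Schwarzian equation `S_q f + g = 0`, in
the class `f(0) = 0`, `f'(0) ≠ 0`, are related by a transformation
`f̃ = f/(a + b·f)` for some `a ≠ 0`, `b ∈ ℚ` (the denominator being a unit). -/
theorem schwarzian_solution_unique_up_to_moebius (g f ftil : PowerSeries ℚ)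
    (hf0 : PowerSeries.constantCoeff (R := ℚ) f = 0)
    (hf1 : PowerSeries.constantCoeff (R := ℚ) (sder f) ≠ 0)
    (hfS : schwarzian f + g = 0)
    (hg0 : PowerSeries.constantCoeff (R := ℚ) ftil = 0)
    (hg1 : PowerSeries.constantCoeff (R := ℚ) (sder ftil) ≠ 0)
    (hgS : schwarzian ftil + g = 0) :
    ∃ a b : ℚ, a ≠ 0 ∧
      IsUnit (PowerSeries.C (R := ℚ) a + PowerSeries.C (R := ℚ) b * f) ∧
      ftil = f * (PowerSeries.C (R := ℚ) a + PowerSeries.C (R := ℚ) b * f)⁻¹ := by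
  have hc1 : coeff (R := ℚ) 1 f ≠ 0 := by rwa [constantCoeff_sder] at hf1
  have hd1 : coeff (R := ℚ) 1 ftil ≠ 0 := by rwa [constantCoeff_sder] at hg1
  set c1 := coeff (R := ℚ) 1 f with hc1def
  set d1 := coeff (R := ℚ) 1 ftil with hd1def
  set c2 := coeff (R := ℚ) 2 f with hc2def
  set d2 := coeff (R := ℚ) 2 ftil with hd2def
  set a := c1 / d1 with hadef
  set b := (a * c2 - a ^ 2 * d2) / c1 ^ 2 with hbdef
  have ha : a ≠ 0 := div_ne_zero hc1 hd1
  refine ⟨a, b, ha, ?_, ?_⟩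
  · rw [PowerSeries.isUnit_iff_constantCoeff, u_const f a b hf0]
    exact isUnit_iff_ne_zero.mpr ha
  have hSfg : schwarzian f = schwarzian ftil := by linear_combination hfS - hgS
  set h := f * (C (R := ℚ) a + C (R := ℚ) b * f)⁻¹ with hhdef
  have hSh : schwarzian h = schwarzian ftil :=
    (moebius_schwarzian f a b ha hf0 hc1).trans hSfg
  have hh0 : constantCoeff (R := ℚ) h = 0 := by
    rw [hhdef, map_mul, hf0, zero_mul]
  have hicc : constantCoeff (R := ℚ) ((C (R := ℚ) a + C (R := ℚ) b * f)⁻¹) = a⁻¹ := by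
    rw [PowerSeries.constantCoeff_inv, u_const f a b hf0]
  have hh1 : coeff (R := ℚ) 1 h = d1 := by
    rw [← constantCoeff_sder, hhdef, moebius_sder f a b ha hf0,
      map_mul, map_mul, map_pow, hicc, PowerSeries.constantCoeff_C, constantCoeff_sder,
      ← hc1def]
    field_simp [hadef]
    rw [hadef, div_mul_cancel₀ _ hd1]
  have hh2 : coeff (R := ℚ) 2 h = d2 := by
    have e1 : coeff (R := ℚ) 1 (sder h) = coeff (R := ℚ) 2 h * 2 := by
      rw [sder, PowerSeries.coeff_derivative]; norm_num
    have e2 : coeff (R := ℚ) 1 (sder h) = constantCoeff (R := ℚ) (sder (sder h)) := by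
      rw [constantCoeff_sder]
    have e3 : constantCoeff (R := ℚ) (sder (sder f)) = 2 * c2 := by
      rw [constantCoeff_sder, sder, PowerSeries.coeff_derivative, ← hc2def]
      norm_num; ring
    have e4 : constantCoeff (R := ℚ) (sder (sder h)) = 2 * c2 / a - 2 * b * c1 ^ 2 / a ^ 2 := by
      rw [hhdef, moebius_sder2 f a b ha hf0]
      rw [map_sub, map_mul, map_mul, map_mul, map_mul, map_pow, map_pow, map_pow,
        hicc, PowerSeries.constantCoeff_C, PowerSeries.constantCoeff_C, e3,
        constantCoeff_sder, ← hc1def]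
      field_simp
    have : coeff (R := ℚ) 2 h * 2 = 2 * c2 / a - 2 * b * c1 ^ 2 / a ^ 2 := by
      rw [← e1, e2, e4]
    rw [hbdef] at this
    have ha2 : a ^ 2 ≠ 0 := pow_ne_zero _ ha
    have hc12 : c1 ^ 2 ≠ 0 := pow_ne_zero _ hc1
    field_simp at this
    have hne : (2 : ℚ) * (a * a ^ 2) ≠ 0 := mul_ne_zero two_ne_zero (mul_ne_zero ha ha2)
    exact mul_right_cancel₀ hne (by linear_combination (2 * a ^ 2) * this)
  have := schwarzian_unique h ftil hh0 hg0 (by rw [hh1]) (by rw [hh2]) (by rw [hh1]; exact hd1) hSh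
  exact this.symm
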